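/- Let H be an abelian group and B a left brace, and let (σ,h) and (σ',h') be two pairs, each consisting of an injective group homomorphism σ : (B,·) → Aut(H,+) (resp. σ') and a surjective group homomorphism h : (H,+) → (B,+) (resp. h') satisfying h(σ(g)(m)) = λ_g(h(m)) for all g ∈ B, m ∈ H (resp. the same for σ',h'). Then the left braces (H, +, x·y := x + σ(h(x))(y)) and (H, +, x⊙y := x + σ'(h'(x))(y)) are isomorphic if and only if there exists F ∈ Aut(H,+) such that σ'(h'(m)) = F⁻¹ ∘ σ(h(F(m))) ∘ F for all m ∈ H. -/

import Mathlib

/-- A left brace: an abelian group `(B,+)` and a group `(B,·)` such that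
`a·(b+c)+a = a·b+a·c` for all `a b c`. -/
class LeftBrace (B : Type*) extends AddCommGroup B, Group B where
  left_brace : ∀ a b c : B, a * (b + c) + a = a * b + a * c

/-- The multiplicative group structure on `AddAut A` (composition), as in the older Mathlib,
where `AddAut A` was a `Group` rather than an `AddGroup`. -/
instance AddAut.group (A : Type*) [Add A] : Group (AddAut A) where
  mul g h := AddEquiv.trans h g
  one := AddEquiv.refl _
  inv := AddEquiv.symm
  mul_assoc _ _ _ := rfl
  one_mul _ := rfl
  mul_one _ := rfl
  inv_mul_cancel := AddEquiv.self_trans_symm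

/-- Given two pairs `(σ,h)` and `(σ',h')` as in Theorem BenDavid, the corresponding left
braces `(H,+,·)` with `x·y = x + σ(h(x))(y)` and `(H,+,⊙)` with `x⊙y = x + σ'(h'(x))(y)`
are isomorphic iff there is `F ∈ Aut(H,+)` with `σ'(h'(m)) = F⁻¹ ∘ σ(h(F(m))) ∘ F` for
all `m`. -/
theorem brace_structures_isomorphic_iff (H : Type*) [AddCommGroup H] (B : Type*) [LeftBrace B]
    (σ σ' : B →* AddAut H) (hσ : Function.Injective σ) (hσ' : Function.Injective σ')
    (h h' : H →+ B) (hh : Function.Surjective h) (hh' : Function.Surjective h')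
    (compat : ∀ (g : B) (m : H), h (σ g m) = g * h m - g)
    (compat' : ∀ (g : B) (m : H), h' (σ' g m) = g * h' m - g) :
    (∃ F : H ≃+ H, ∀ x y : H, F (x + σ' (h' x) y) = F x + σ (h (F x)) (F y)) ↔
    (∃ F : AddAut H, ∀ m : H, σ' (h' m) = F⁻¹ * σ (h (F m)) * F) := by
  constructor
  · rintro ⟨F, hF⟩
    refine ⟨F, fun m => ?_⟩
    ext y
    have := hF m y
    rw [map_add] at this
    have h2 : F (σ' (h' m) y) = σ (h (F m)) (F y) := by
      exact add_left_cancel this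
    show σ' (h' m) y = F⁻¹ (σ (h (F m)) (F y))
    rw [← h2]
    exact (F.symm_apply_apply _).symm
  · rintro ⟨F, hF⟩
    refine ⟨F, fun x y => ?_⟩
    rw [map_add]
    congr 1
    have := congrArg (fun e : AddAut H => e y) (hF x)
    replace this : σ' (h' x) y = (F⁻¹ * σ (h (F x)) * F) y := this
    rw [this]
    show F (F⁻¹ (σ (h (F x)) (F y))) = _
    exact F.apply_symm_apply _
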